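/- For the MA(q) process with continuous i.i.d. innovations, for every distance d with 2 ≤ d < q, the conditional probability that the next local maximum after a local maximum at ξ_i occurs exactly at ξ_{i+d} equals (d−1)/2^d. -/

import Mathlib

open MeasureTheory ProbabilityTheory ENNReal

/-- Error terms of an MA(q) process: `ξ i ω = ∑_{j=0}^q ε (i - j) ω`. -/
noncomputable def MAerr {Ω : Type*} (q : ℕ) (ε : ℤ → Ω → ℝ) (i : ℤ) (ω : Ω) : ℝ :=
  ∑ j ∈ Finset.range (q + 1), ε (i - (j : ℤ)) ω

/-- A local maximum of the MA(q) error terms at index `i`. -/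
def MAlocalMax {Ω : Type*} (q : ℕ) (ε : ℤ → Ω → ℝ) (i : ℤ) (ω : Ω) : Prop :=
  MAerr q ε (i - 1) ω < MAerr q ε i ω ∧ MAerr q ε i ω > MAerr q ε (i + 1) ω

section helpers

lemma MAerr_sub {Ω : Type*} (q : ℕ) (ε : ℤ → Ω → ℝ) (m : ℤ) (ω : Ω) :
    MAerr q ε m ω - MAerr q ε (m - 1) ω = ε m ω - ε (m - (q + 1)) ω := by
  have key1 : (∑ j ∈ Finset.range (q+2), ε (m - (j:ℤ)) ω) = MAerr q ε (m-1) ω + ε m ω := by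
    rw [Finset.sum_range_succ' (fun j => ε (m - (j:ℤ)) ω) (q+1)]
    unfold MAerr
    congr 1
    · apply Finset.sum_congr rfl; intro j _; congr 1; push_cast; ring
    · congr 1; push_cast; ring
  have key2 : (∑ j ∈ Finset.range (q+2), ε (m - (j:ℤ)) ω)
      = MAerr q ε m ω + ε (m - (q+1)) ω := by
    rw [Finset.sum_range_succ]
    unfold MAerr
    congr 2
  linarith [key1, key2]

lemma MAlocalMax_iff {Ω : Type*} (q : ℕ) (ε : ℤ → Ω → ℝ) (m : ℤ) (ω : Ω) :
    MAlocalMax q ε m ω ↔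
      (0 < ε m ω - ε (m - (q + 1)) ω ∧ ε (m+1) ω - ε (m + 1 - (q + 1)) ω < 0) := by
  unfold MAlocalMax
  rw [← sub_pos, MAerr_sub]
  have h : MAerr q ε (m+1) ω - MAerr q ε m ω = ε (m+1) ω - ε (m+1-(q+1)) ω := by
    have := MAerr_sub q ε (m+1) ω; simpa using this
  constructor
  · rintro ⟨h1, h2⟩
    exact ⟨h1, by linarith⟩
  · rintro ⟨h1, h2⟩
    exact ⟨h1, by rw [gt_iff_lt, ← sub_neg, h]; exact h2⟩

variable {Ω : Type*} [mΩ : MeasurableSpace Ω] (μ : Measure Ω) [IsProbabilityMeasure μ]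
  (ε : ℤ → Ω → ℝ)

lemma map_pair_eq (hmeas : ∀ i, Measurable (ε i))
    (hindep : iIndepFun ε μ) {u v : ℤ} (huv : u ≠ v) :
    μ.map (fun ω => (ε u ω, ε v ω)) = (μ.map (ε u)).prod (μ.map (ε v)) :=
  (indepFun_iff_map_prod_eq_prod_map_map (hmeas u).aemeasurable (hmeas v).aemeasurable).mp
    (hindep.indepFun huv)

lemma eq_null (hmeas : ∀ i, Measurable (ε i))
    (hindep : iIndepFun ε μ)
    (hatomless : ∀ (i : ℤ) (a : ℝ), μ {ω | ε i ω = a} = 0)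
    {u v : ℤ} (huv : u ≠ v) :
    μ {ω | ε u ω = ε v ω} = 0 := by
  have hpair : Measurable (fun ω => (ε u ω, ε v ω)) := (hmeas u).prodMk (hmeas v)
  have hD : MeasurableSet {p : ℝ × ℝ | p.2 = p.1} :=
    measurableSet_eq_fun measurable_snd measurable_fst
  have heq : {ω | ε u ω = ε v ω} = (fun ω => (ε u ω, ε v ω)) ⁻¹' {p | p.2 = p.1} := by
    ext ω; simp [eq_comm]
  rw [heq, ← Measure.map_apply hpair hD, map_pair_eq μ ε hmeas hindep huv,
    Measure.prod_apply hD]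
  have hz : ∀ x : ℝ, (μ.map (ε v)) (Prod.mk x ⁻¹' {p : ℝ × ℝ | p.2 = p.1}) = 0 := by
    intro x
    have hx : Prod.mk x ⁻¹' {p : ℝ × ℝ | p.2 = p.1} = {x} := by ext y; simp
    rw [hx, Measure.map_apply (hmeas v) (measurableSet_singleton x)]
    exact hatomless v x
  simp only [hz]
  simp

lemma lt_half (hmeas : ∀ i, Measurable (ε i))
    (hindep : iIndepFun ε μ)
    (hid : ∀ i j : ℤ, IdentDistrib (ε i) (ε j) μ μ)
    (hatomless : ∀ (i : ℤ) (a : ℝ), μ {ω | ε i ω = a} = 0)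
    {u v : ℤ} (huv : u ≠ v) :
    μ {ω | ε u ω < ε v ω} = 2⁻¹ := by
  have hpair : Measurable (fun ω => (ε u ω, ε v ω)) := (hmeas u).prodMk (hmeas v)
  have hS : MeasurableSet {p : ℝ × ℝ | p.1 < p.2} :=
    measurableSet_lt measurable_fst measurable_snd
  have hS' : MeasurableSet {p : ℝ × ℝ | p.2 < p.1} :=
    measurableSet_lt measurable_snd measurable_fst
  set ν := μ.map (ε u) with hν
  have hνv : μ.map (ε v) = ν := ((hid v u).map_eq)
  have hmap : μ.map (fun ω => (ε u ω, ε v ω)) = ν.prod ν := by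
    rw [map_pair_eq μ ε hmeas hindep huv, hνv]
  have hA : μ {ω | ε u ω < ε v ω} = (ν.prod ν) {p : ℝ × ℝ | p.1 < p.2} := by
    have he : {ω | ε u ω < ε v ω} = (fun ω => (ε u ω, ε v ω)) ⁻¹' {p | p.1 < p.2} := rfl
    rw [he, ← Measure.map_apply hpair hS, hmap]
  have hB : μ {ω | ε v ω < ε u ω} = (ν.prod ν) {p : ℝ × ℝ | p.2 < p.1} := by
    have he : {ω | ε v ω < ε u ω} = (fun ω => (ε u ω, ε v ω)) ⁻¹' {p | p.2 < p.1} := rfl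
    rw [he, ← Measure.map_apply hpair hS', hmap]
  have hswap : (ν.prod ν) {p : ℝ × ℝ | p.2 < p.1} = (ν.prod ν) {p : ℝ × ℝ | p.1 < p.2} := by
    have hfin : IsFiniteMeasure ν := by
      refine ⟨?_⟩
      rw [hν, Measure.map_apply (hmeas u) MeasurableSet.univ]
      simp
    have h1 : (ν.prod ν).map Prod.swap = ν.prod ν := Measure.prod_swap
    calc (ν.prod ν) {p : ℝ × ℝ | p.2 < p.1}
        = ((ν.prod ν).map Prod.swap) {p : ℝ × ℝ | p.2 < p.1} := by rw [h1]
      _ = (ν.prod ν) (Prod.swap ⁻¹' {p : ℝ × ℝ | p.2 < p.1}) := by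
          rw [Measure.map_apply measurable_swap hS']
      _ = (ν.prod ν) {p : ℝ × ℝ | p.1 < p.2} := rfl
  have hAB : μ {ω | ε u ω < ε v ω} = μ {ω | ε v ω < ε u ω} := by
    rw [hA, hB, hswap]
  have hsum : μ {ω | ε u ω < ε v ω} + μ {ω | ε v ω < ε u ω}
      + μ {ω | ε u ω = ε v ω} = 1 := by
    have hdis : Disjoint {ω | ε u ω < ε v ω} {ω | ε v ω < ε u ω} := by
      rw [Set.disjoint_left]; intro ω h1 h2
      simp only [Set.mem_setOf_eq] at h1 h2; exact lt_asymm h1 h2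
    have hdis2 : Disjoint ({ω | ε u ω < ε v ω} ∪ {ω | ε v ω < ε u ω}) {ω | ε u ω = ε v ω} := by
      rw [Set.disjoint_left]; rintro ω (h1 | h1) h2 <;> simp only [Set.mem_setOf_eq] at * <;>
        simp [h2] at h1
    have hcover : ({ω | ε u ω < ε v ω} ∪ {ω | ε v ω < ε u ω}) ∪ {ω | ε u ω = ε v ω} = Set.univ := by
      ext ω; simp only [Set.mem_union, Set.mem_setOf_eq, Set.mem_univ, iff_true]
      rcases lt_trichotomy (ε u ω) (ε v ω) with h | h | h
      · exact Or.inl (Or.inl h)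
      · exact Or.inr h
      · exact Or.inl (Or.inr h)
    have m2 : MeasurableSet {ω | ε v ω < ε u ω} := measurableSet_lt (hmeas v) (hmeas u)
    have m3 : MeasurableSet {ω | ε u ω = ε v ω} := measurableSet_eq_fun (hmeas u) (hmeas v)
    rw [← measure_union hdis m2, ← measure_union hdis2 m3, hcover, measure_univ]
  rw [eq_null μ ε hmeas hindep hatomless huv, add_zero, ← hAB, ← two_mul] at hsum
  have h2 : (2 : ℝ≥0∞) ≠ 0 := by norm_num
  have h2' : (2 : ℝ≥0∞) ≠ ⊤ := by norm_num
  calc μ {ω | ε u ω < ε v ω} = 2⁻¹ * (2 * μ {ω | ε u ω < ε v ω}) := by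
        rw [← mul_assoc, ENNReal.inv_mul_cancel h2 h2', one_mul]
    _ = 2⁻¹ := by rw [hsum, mul_one]

lemma meas_biInter_pairs (hmeas : ∀ i, Measurable (ε i))
    (hindep : iIndepFun ε μ)
    {ι : Type*} (a b : ι → ℤ) (hab : ∀ k k', a k ≠ b k')
    (ha : Function.Injective a) (hb : Function.Injective b)
    (s : ι → Set (ℝ × ℝ)) (hs : ∀ k, MeasurableSet (s k)) (S : Finset ι) :
    μ (⋂ k ∈ S, {ω | (ε (a k) ω, ε (b k) ω) ∈ s k})
      = ∏ k ∈ S, μ {ω | (ε (a k) ω, ε (b k) ω) ∈ s k} := by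
  classical
  set m : ℤ → MeasurableSpace Ω := fun x => MeasurableSpace.comap (ε x) inferInstance with hm
  have h_le : ∀ x, m x ≤ mΩ := fun x => (hmeas x).comap_le
  have hiI : iIndep m μ := hindep.iIndep
  have hBmeas : ∀ (k : ι) (G : Set ℤ), a k ∈ G → b k ∈ G →
      MeasurableSet[⨆ x ∈ G, m x] {ω | (ε (a k) ω, ε (b k) ω) ∈ s k} := by
    intro k G haG hbG
    have h1 : @Measurable Ω ℝ (⨆ x ∈ G, m x) _ (ε (a k)) :=
      measurable_iff_comap_le.2 (le_biSup m haG)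
    have h2 : @Measurable Ω ℝ (⨆ x ∈ G, m x) _ (ε (b k)) :=
      measurable_iff_comap_le.2 (le_biSup m hbG)
    exact (h1.prodMk h2) (hs k)
  induction S using Finset.induction with
  | empty => simp
  | insert k S hk ih =>
    rw [Finset.set_biInter_insert, Finset.prod_insert hk, ← ih]
    set G1 : Set ℤ := {a k, b k} with hG1
    set G2 : Set ℤ := ⋃ k' ∈ (S : Set ι), {a k', b k'} with hG2
    have hdisj : Disjoint G1 G2 := by
      rw [Set.disjoint_left]
      rintro x hx1 hx2
      simp only [hG1, Set.mem_insert_iff, Set.mem_singleton_iff] at hx1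
      simp only [hG2, Set.mem_iUnion, Set.mem_insert_iff, Set.mem_singleton_iff] at hx2
      obtain ⟨k', hk', hx2⟩ := hx2
      rcases hx1 with rfl | rfl <;> rcases hx2 with h | h
      · cases ha h; exact hk hk'
      · exact hab k k' h
      · exact hab k' k h.symm
      · cases hb h; exact hk hk'
    have hindep2 : Indep (⨆ x ∈ G1, m x) (⨆ x ∈ G2, m x) μ :=
      indep_iSup_of_disjoint h_le hiI hdisj
    have hA : MeasurableSet[⨆ x ∈ G1, m x] {ω | (ε (a k) ω, ε (b k) ω) ∈ s k} :=
      hBmeas k G1 (by simp [hG1]) (by simp [hG1])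
    have hB : MeasurableSet[⨆ x ∈ G2, m x] (⋂ k' ∈ S, {ω | (ε (a k') ω, ε (b k') ω) ∈ s k'}) := by
      refine MeasurableSet.biInter S.countable_toSet (fun k' hk' => ?_)
      exact hBmeas k' G2 (by simp only [hG2, Set.mem_iUnion]; exact ⟨k', hk', Or.inl rfl⟩)
        (by simp only [hG2, Set.mem_iUnion]; exact ⟨k', hk', Or.inr rfl⟩)
    exact (hindep2.indepSet_of_measurableSet hA hB).measure_inter_eq_mul

end helpers

lemma count_lemma (d : ℕ) (hd : 2 ≤ d) (P : (Fin (d+2) → Bool) → Prop) [DecidablePred P]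
    (hP : ∀ c, P c ↔ (c ⟨0, by omega⟩ = true ∧ c ⟨1, by omega⟩ = false ∧
      c ⟨d, by omega⟩ = true ∧ c ⟨d+1, by omega⟩ = false ∧
      ∀ j : ℕ, ∀ _ : 1 ≤ j, ∀ _ : j < d,
        ¬(c ⟨j, by omega⟩ = true ∧ c ⟨j+1, by omega⟩ = false))) :
    (Finset.univ.filter P).card = d - 1 := by
  classical
  set g : ℕ → (Fin (d+2) → Bool) := fun m k => decide (k.val = 0 ∨ (m < k.val ∧ k.val ≤ d))
    with hg
  have key : Finset.univ.filter P = (Finset.Ico 1 d).image g := by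
    ext c
    simp only [Finset.mem_filter, Finset.mem_univ, true_and, Finset.mem_image,
      Finset.mem_Ico]
    constructor
    · intro hc
      rw [hP] at hc
      obtain ⟨h0, h1, hdT, hd1F, hmono⟩ := hc
      set c' : ℕ → Bool := fun j => if h : j < d + 2 then c ⟨j, h⟩ else false with hc'
      have hc'eq : ∀ j (h : j < d + 2), c' j = c ⟨j, h⟩ := by
        intro j h; simp only [hc', dif_pos h]
      have mono' : ∀ j, 1 ≤ j → j < d → c' j = true → c' (j+1) = true := by
        intro j hj1 hjd ht
        by_contra hf
        refine hmono j hj1 hjd ⟨?_, ?_⟩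
        · rw [← hc'eq j (by omega)]; exact ht
        · rw [← hc'eq (j+1) (by omega)]
          cases h : c' (j+1) with
          | false => rfl
          | true => exact absurd h hf
      have chain : ∀ t j', 1 ≤ j' → j' + t ≤ d → c' j' = true → c' (j' + t) = true := by
        intro t
        induction t with
        | zero => intro j' _ _ h; simpa using h
        | succ t iht =>
          intro j' hj1 hjd h
          have h1' : c' (j' + t) = true := iht j' hj1 (by omega) h
          have h2' := mono' (j' + t) (by omega) (by omega) h1'
          rw [(by omega : j' + (t+1) = j' + t + 1)]
          exact h2'
      set F : Finset ℕ := (Finset.Icc 1 d).filter (fun j => c' j = false) with hF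
      have upprop : ∀ j j', j ∈ F → 1 ≤ j' → j' ≤ j → j' ∈ F := by
        intro j j' hj hj'1 hj'le
        simp only [hF, Finset.mem_filter, Finset.mem_Icc] at hj ⊢
        obtain ⟨⟨hja, hjb⟩, hjf⟩ := hj
        refine ⟨⟨hj'1, by omega⟩, ?_⟩
        cases h : c' j' with
        | false => rfl
        | true =>
          have hch := chain (j - j') j' hj'1 (by omega) h
          rw [(by omega : j' + (j - j') = j)] at hch
          rw [hch] at hjf; exact absurd hjf (by simp)
      set m := F.card with hm
      have h1F : 1 ∈ F := by
        simp only [hF, Finset.mem_filter, Finset.mem_Icc]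
        exact ⟨⟨le_refl 1, by omega⟩, by rw [hc'eq 1 (by omega)]; exact h1⟩
      have hdnF : d ∉ F := by
        simp only [hF, Finset.mem_filter, Finset.mem_Icc]
        rintro ⟨-, hfd⟩
        rw [hc'eq d (by omega), hdT] at hfd
        exact absurd hfd (by simp)
      have hm1 : 1 ≤ m := Finset.card_pos.2 ⟨1, h1F⟩
      have hmd : m < d := by
        have hsub : F ⊆ Finset.Ico 1 d := by
          intro j hj
          have hj' := hj
          simp only [hF, Finset.mem_filter, Finset.mem_Icc] at hj'
          rw [Finset.mem_Ico]
          refine ⟨hj'.1.1, ?_⟩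
          rcases Nat.lt_or_ge j d with h | h
          · exact h
          · exfalso
            have hjd : j = d := by omega
            subst hjd
            exact hdnF hj
        have := Finset.card_le_card hsub
        rw [Nat.card_Ico] at this
        omega
      have hiff : ∀ j, j ∈ F ↔ (1 ≤ j ∧ j ≤ m) := by
        intro j
        constructor
        · intro hj
          have hj1 : 1 ≤ j := by
            simp only [hF, Finset.mem_filter, Finset.mem_Icc] at hj; exact hj.1.1
          refine ⟨hj1, ?_⟩
          have hsub : Finset.Icc 1 j ⊆ F := by
            intro j' hj'
            rw [Finset.mem_Icc] at hj'
            exact upprop j j' hj hj'.1 hj'.2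
          have := Finset.card_le_card hsub
          rw [Nat.card_Icc] at this
          omega
        · rintro ⟨hj1, hjm⟩
          by_contra hnot
          have hsub : F ⊆ Finset.Ico 1 j := by
            intro j'' hj''
            have h1'' : 1 ≤ j'' := by
              simp only [hF, Finset.mem_filter, Finset.mem_Icc] at hj''; exact hj''.1.1
            rw [Finset.mem_Ico]
            refine ⟨h1'', ?_⟩
            by_contra hge
            exact hnot (upprop j'' j hj'' hj1 (by omega))
          have := Finset.card_le_card hsub
          rw [Nat.card_Ico] at this
          omega
      refine ⟨m, ⟨hm1, hmd⟩, ?_⟩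
      funext k
      rcases k with ⟨j, hjlt⟩
      simp only [hg]
      rcases Nat.eq_zero_or_pos j with rfl | hj1
      · simpa using h0.symm
      rcases Nat.lt_or_ge j (d+1) with hjd | hjd
      · -- 1 ≤ j ≤ d
        have hjle : j ≤ d := by omega
        rcases Nat.lt_or_ge m j with hmj | hmj
        · -- m < j : both true
          have hnF : j ∉ F := by rw [hiff]; omega
          have hcj : c ⟨j, hjlt⟩ = true := by
            rw [← hc'eq j hjlt]
            cases h : c' j with
            | true => rfl
            | false =>
              exact absurd (by
                simp only [hF, Finset.mem_filter, Finset.mem_Icc]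
                exact ⟨⟨hj1, hjle⟩, h⟩) hnF
          rw [hcj]
          simp only [decide_eq_true_eq]
          omega
        · -- j ≤ m : both false
          have hinF : j ∈ F := by rw [hiff]; exact ⟨hj1, hmj⟩
          have hcj : c ⟨j, hjlt⟩ = false := by
            rw [← hc'eq j hjlt]
            simp only [hF, Finset.mem_filter, Finset.mem_Icc] at hinF
            exact hinF.2
          rw [hcj]
          simp only [decide_eq_false_iff_not]
          omega
      · -- j = d + 1
        have hjd1 : j = d + 1 := by omega
        subst hjd1
        rw [hd1F]
        simp only [decide_eq_false_iff_not]
        omega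
    · rintro ⟨m, ⟨hm1, hmd⟩, rfl⟩
      rw [hP]
      refine ⟨?_, ?_, ?_, ?_, ?_⟩
      · simp [hg]
      · simp only [hg, decide_eq_false_iff_not]; omega
      · simp only [hg, decide_eq_true_eq]; omega
      · simp only [hg, decide_eq_false_iff_not]; omega
      · intro j hj1 hjd hcon
        obtain ⟨hT, hF⟩ := hcon
        simp only [hg, decide_eq_true_eq] at hT
        simp only [hg, decide_eq_false_iff_not] at hF
        omega
  rw [key]
  rw [Finset.card_image_of_injOn]
  · rw [Nat.card_Ico]
  · intro m hm m' hm' heq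
    rw [Finset.coe_Ico, Set.mem_Ico] at hm hm'
    rcases Nat.lt_trichotomy m m' with h | h | h
    · exfalso
      have := congrFun heq ⟨m+1, by omega⟩
      simp only [hg, decide_eq_decide] at this
      omega
    · exact h
    · exfalso
      have := congrFun heq ⟨m'+1, by omega⟩
      simp only [hg, decide_eq_decide] at this
      omega


/-- For `2 ≤ d < q` with atomless i.i.d. innovations, the conditional probability that
the next local maximum after a local maximum at `i` occurs exactly at distance `d`
equals `(d-1)/2^d`. -/
theorem MA_cond_prob_dist
    {Ω : Type*} [MeasurableSpace Ω] (μ : Measure Ω) [IsProbabilityMeasure μ]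
    (ε : ℤ → Ω → ℝ) (hmeas : ∀ i, Measurable (ε i))
    (hindep : iIndepFun ε μ)
    (hid : ∀ i j : ℤ, IdentDistrib (ε i) (ε j) μ μ)
    (hatomless : ∀ (i : ℤ) (a : ℝ), μ {ω | ε i ω = a} = 0)
    (d q : ℕ) (hd : 2 ≤ d) (hq : d < q) (i : ℤ) :
    μ[|{ω | MAlocalMax q ε i ω}]
      {ω | MAlocalMax q ε (i + d) ω ∧
        ∀ k : ℤ, 1 ≤ k → k < (d : ℤ) → ¬MAlocalMax q ε (i + k) ω}
      = ((d : ℝ≥0∞) - 1) / 2 ^ d := by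
  classical
  -- index maps
  set a : Fin (d+2) → ℤ := fun k => i + (k.val : ℤ) with ha_def
  set b : Fin (d+2) → ℤ := fun k => i + (k.val : ℤ) - ((q : ℤ) + 1) with hb_def
  have hab : ∀ k k' : Fin (d+2), a k ≠ b k' := by
    intro k k' h
    simp only [ha_def, hb_def] at h
    have h1 := k.isLt
    have h2 := k'.isLt
    omega
  have hainj : Function.Injective a := by
    intro k k' h
    simp only [ha_def] at h
    exact Fin.ext (by omega)
  have hbinj : Function.Injective b := by
    intro k k' h
    simp only [hb_def] at h
    exact Fin.ext (by omega)
  -- the half-space sets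
  set Spos : Set (ℝ × ℝ) := {p | p.2 < p.1} with hSpos
  set Sneg : Set (ℝ × ℝ) := {p | p.1 < p.2} with hSneg
  have hSposm : MeasurableSet Spos := measurableSet_lt measurable_snd measurable_fst
  have hSnegm : MeasurableSet Sneg := measurableSet_lt measurable_fst measurable_snd
  -- Boolean-indexed sign events
  set Bs : Bool → Fin (d+2) → Set Ω :=
    fun t k => {ω | (ε (a k) ω, ε (b k) ω) ∈ (cond t Spos Sneg)} with hBs
  have hBsm : ∀ t k, MeasurableSet (Bs t k) := by
    intro t k
    have : MeasurableSet (cond t Spos Sneg) := by cases t <;> simpa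
    exact ((hmeas (a k)).prodMk (hmeas (b k))) this
  have hμBs : ∀ t k, μ (Bs t k) = 2⁻¹ := by
    intro t k
    cases t
    · exact lt_half μ ε hmeas hindep hid hatomless (hab k k)
    · exact lt_half μ ε hmeas hindep hid hatomless (fun h => hab k k h.symm)
  have hBsdis : ∀ k ω, ω ∈ Bs true k → ω ∈ Bs false k → False := by
    intro k ω h1 h2
    simp only [hBs, Set.mem_setOf_eq, cond_true, cond_false, hSpos, hSneg] at h1 h2
    exact lt_asymm h1 h2
  -- sign determination off the null set
  set N : Set Ω := ⋃ k : Fin (d+2), {ω | ε (a k) ω = ε (b k) ω} with hN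
  have hμN : μ N = 0 :=
    measure_iUnion_null (fun k => eq_null μ ε hmeas hindep hatomless (hab k k))
  -- local maxima in terms of sign events
  have hLM : ∀ (k : ℕ) (hk : k < d + 1) (ω : Ω),
      MAlocalMax q ε (i + (k : ℤ)) ω ↔
        (ω ∈ Bs true ⟨k, by omega⟩ ∧ ω ∈ Bs false ⟨k+1, by omega⟩) := by
    intro k hk ω
    rw [MAlocalMax_iff]
    have e1 : a ⟨k, by omega⟩ = i + (k : ℤ) := rfl
    have e2 : a ⟨k+1, by omega⟩ = i + (k : ℤ) + 1 := by
      simp only [ha_def]; push_cast; ring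
    have e3 : b ⟨k, by omega⟩ = i + (k : ℤ) - ((q : ℤ) + 1) := rfl
    have e4 : b ⟨k+1, by omega⟩ = i + (k : ℤ) + 1 - ((q : ℤ) + 1) := by
      simp only [hb_def]; push_cast; ring
    simp only [hBs, Set.mem_setOf_eq, cond_true, cond_false, hSpos, hSneg, e1, e2, e3, e4]
    rw [sub_pos, sub_neg]
  -- the combinatorial predicate
  set P : (Fin (d+2) → Bool) → Prop := fun c =>
    c ⟨0, by omega⟩ = true ∧ c ⟨1, by omega⟩ = false ∧ c ⟨d, by omega⟩ = true ∧
    c ⟨d+1, by omega⟩ = false ∧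
    ∀ j : ℕ, ∀ _ : 1 ≤ j, ∀ _ : j < d,
      ¬(c ⟨j, by omega⟩ = true ∧ c ⟨j+1, by omega⟩ = false) with hPdef
  haveI : DecidablePred P := Classical.decPred P
  set V : Finset (Fin (d+2) → Bool) := Finset.univ.filter P with hV
  have hVcard : V.card = d - 1 := count_lemma d hd P (fun c => Iff.rfl)
  -- atoms
  set atom : (Fin (d+2) → Bool) → Set Ω :=
    fun c => ⋂ k ∈ (Finset.univ : Finset (Fin (d+2))), Bs (c k) k with hatom
  have hatommeas : ∀ c, MeasurableSet (atom c) := fun c =>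
    MeasurableSet.biInter (Set.to_countable _) (fun k _ => hBsm _ k)
  have hμatom : ∀ c, μ (atom c) = 2⁻¹ ^ (d+2) := by
    intro c
    have hkey := meas_biInter_pairs μ ε hmeas hindep a b hab hainj hbinj
      (fun k => cond (c k) Spos Sneg)
      (fun k => by
        cases hck : c k
        · simp only [hck, cond_false]; exact hSnegm
        · simp only [hck, cond_true]; exact hSposm) Finset.univ
    calc μ (atom c) = ∏ k ∈ Finset.univ, μ (Bs (c k) k) := hkey
      _ = ∏ _k ∈ (Finset.univ : Finset (Fin (d+2))), (2⁻¹ : ℝ≥0∞) :=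
          Finset.prod_congr rfl (fun k _ => hμBs (c k) k)
      _ = 2⁻¹ ^ (d+2) := by rw [Finset.prod_const, Finset.card_univ, Fintype.card_fin]
  -- the conditioning event and the target event
  set C : Set Ω := {ω | MAlocalMax q ε i ω} with hC
  set E : Set Ω := {ω | MAlocalMax q ε (i + d) ω ∧
      ∀ k : ℤ, 1 ≤ k → k < (d : ℤ) → ¬MAlocalMax q ε (i + k) ω} with hE
  have hMAmeas : ∀ m : ℤ, Measurable (fun ω => MAerr q ε m ω) := by
    intro m; apply Finset.measurable_sum; intro j _; exact hmeas _
  have hCmeas : MeasurableSet C := by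
    have hCeq' : C = {ω | MAerr q ε (i-1) ω < MAerr q ε i ω}
        ∩ {ω | MAerr q ε (i+1) ω < MAerr q ε i ω} := by
      ext ω
      simp only [hC, Set.mem_setOf_eq, Set.mem_inter_iff, MAlocalMax, gt_iff_lt]
    rw [hCeq']
    exact (measurableSet_lt (hMAmeas _) (hMAmeas _)).inter
      (measurableSet_lt (hMAmeas _) (hMAmeas _))
  -- μ C = 2⁻¹ * 2⁻¹
  have hCeq : C = Bs true ⟨0, by omega⟩ ∩ Bs false ⟨1, by omega⟩ := by
    ext ω
    have h := hLM 0 (by omega) ω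
    have e : i + ((0:ℕ):ℤ) = i := by simp
    rw [e] at h
    simp only [hC, Set.mem_setOf_eq, Set.mem_inter_iff]
    exact h
  have hμC : μ C = 2⁻¹ * 2⁻¹ := by
    classical
    set s2 : Fin (d+2) → Set (ℝ × ℝ) := fun k => if k.val = 0 then Spos else Sneg with hs2
    have hs2m : ∀ k, MeasurableSet (s2 k) := by
      intro k
      by_cases h : k.val = 0
      · simp only [hs2, if_pos h]; exact hSposm
      · simp only [hs2, if_neg h]; exact hSnegm
    have h01 : (⟨0, by omega⟩ : Fin (d+2)) ≠ ⟨1, by omega⟩ := by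
      intro h
      have h' := congrArg Fin.val h
      simp only [Fin.val_mk] at h'
      exact absurd h' (by norm_num)
    have hkey := meas_biInter_pairs μ ε hmeas hindep a b hab hainj hbinj s2 hs2m
      ({⟨0, by omega⟩, ⟨1, by omega⟩} : Finset (Fin (d+2)))
    have e0 : {ω | (ε (a ⟨0, by omega⟩) ω, ε (b ⟨0, by omega⟩) ω) ∈ s2 ⟨0, by omega⟩}
        = Bs true ⟨0, by omega⟩ := by
      ext ω; simp [hs2, hBs]
    have e1 : {ω | (ε (a ⟨1, by omega⟩) ω, ε (b ⟨1, by omega⟩) ω) ∈ s2 ⟨1, by omega⟩}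
        = Bs false ⟨1, by omega⟩ := by
      ext ω; simp [hs2, hBs]
    rw [Finset.set_biInter_insert, Finset.set_biInter_singleton, e0, e1,
      Finset.prod_insert (by simpa using h01), Finset.prod_singleton, e0, e1] at hkey
    rw [hCeq, hkey, hμBs true _, hμBs false _]
  -- decomposition of C ∩ E into atoms, off the null set N
  have hdecomp : (C ∩ E) \ N = (⋃ c ∈ V, atom c) \ N := by
    ext ω
    simp only [Set.mem_diff, Set.mem_inter_iff]
    constructor
    · rintro ⟨⟨hωC, hωE⟩, hωN⟩
      refine ⟨?_, hωN⟩
      have hne : ∀ k : Fin (d+2), ε (a k) ω ≠ ε (b k) ω := by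
        intro k h
        exact hωN (Set.mem_iUnion.2 ⟨k, h⟩)
      set c : Fin (d+2) → Bool := fun k => decide (ε (b k) ω < ε (a k) ω) with hc
      have hmem : ∀ k, ω ∈ Bs (c k) k := by
        intro k
        rcases lt_trichotomy (ε (b k) ω) (ε (a k) ω) with h | h | h
        · have hck : c k = true := by simp [hc, h]
          rw [hck]
          simpa [hBs, hSpos] using h
        · exact absurd h.symm (hne k)
        · have hck : c k = false := by simp [hc]; exact le_of_lt h
          rw [hck]
          simpa [hBs, hSneg] using h
      have hctrue : ∀ k, ω ∈ Bs true k → c k = true := by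
        intro k h
        cases hck : c k with
        | true => rfl
        | false => exact absurd (hck ▸ hmem k) (fun hh => hBsdis k ω h hh)
      have hcfalse : ∀ k, ω ∈ Bs false k → c k = false := by
        intro k h
        cases hck : c k with
        | false => rfl
        | true => exact absurd (hck ▸ hmem k) (fun hh => hBsdis k ω hh h)
      have hPc : P c := by
        rw [hC, Set.mem_setOf_eq] at hωC
        rw [hE, Set.mem_setOf_eq] at hωE
        have h0 := hLM 0 (by omega) ω
        have e : i + ((0:ℕ):ℤ) = i := by simp
        rw [e] at h0
        obtain ⟨hB0, hB1⟩ := h0.mp hωC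
        obtain ⟨hBd, hBd1⟩ := (hLM d (by omega) ω).mp hωE.1
        refine ⟨hctrue _ hB0, hcfalse _ hB1, hctrue _ hBd, hcfalse _ hBd1, ?_⟩
        intro j hj1 hjd hcon
        obtain ⟨hT, hF⟩ := hcon
        have hLMj : MAlocalMax q ε (i + (j:ℤ)) ω := by
          rw [hLM j (by omega) ω]
          have hm1 : ω ∈ Bs (c ⟨j, by omega⟩) ⟨j, by omega⟩ := hmem _
          have hm2 : ω ∈ Bs (c ⟨j+1, by omega⟩) ⟨j+1, by omega⟩ := hmem _
          rw [show c ⟨j, by omega⟩ = true from hT] at hm1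
          rw [show c ⟨j+1, by omega⟩ = false from hF] at hm2
          exact ⟨hm1, hm2⟩
        exact hωE.2 (j:ℤ) (by exact_mod_cast hj1) (by exact_mod_cast hjd) hLMj
      refine Set.mem_iUnion₂.2 ⟨c, Finset.mem_filter.2 ⟨Finset.mem_univ _, hPc⟩, ?_⟩
      exact Set.mem_iInter₂.2 (fun k _ => hmem k)
    · rintro ⟨hωU, hωN⟩
      refine ⟨?_, hωN⟩
      obtain ⟨c, hcV, hωc⟩ := Set.mem_iUnion₂.1 hωU
      have hPc : P c := (Finset.mem_filter.1 hcV).2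
      have hmem : ∀ k, ω ∈ Bs (c k) k := fun k => Set.mem_iInter₂.1 hωc k (Finset.mem_univ k)
      obtain ⟨h0, h1, hdT, hd1, hmono⟩ := hPc
      have hBtrue : ∀ k, c k = true → ω ∈ Bs true k := fun k h => h ▸ hmem k
      have hBfalse : ∀ k, c k = false → ω ∈ Bs false k := fun k h => h ▸ hmem k
      have hctrue : ∀ k, ω ∈ Bs true k → c k = true := by
        intro k h
        cases hck : c k with
        | true => rfl
        | false => exact absurd (hck ▸ hmem k) (fun hh => hBsdis k ω h hh)
      have hcfalse : ∀ k, ω ∈ Bs false k → c k = false := by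
        intro k h
        cases hck : c k with
        | false => rfl
        | true => exact absurd (hck ▸ hmem k) (fun hh => hBsdis k ω hh h)
      have hωC : ω ∈ C := by
        rw [hC, Set.mem_setOf_eq]
        have h := hLM 0 (by omega) ω
        have e : i + ((0:ℕ):ℤ) = i := by simp
        rw [e] at h
        exact h.mpr ⟨hBtrue _ h0, hBfalse _ h1⟩
      refine ⟨hωC, ?_⟩
      rw [hE, Set.mem_setOf_eq]
      constructor
      · exact (hLM d (by omega) ω).mpr ⟨hBtrue _ hdT, hBfalse _ hd1⟩
      · intro k hk1 hkd hLMk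
        set j : ℕ := k.toNat with hj
        have hjk : (j : ℤ) = k := Int.toNat_of_nonneg (by omega)
        have hj1 : 1 ≤ j := by omega
        have hjd : j < d := by omega
        rw [← hjk] at hLMk
        obtain ⟨hT, hF⟩ := (hLM j (by omega) ω).mp hLMk
        exact hmono j hj1 hjd ⟨hctrue _ hT, hcfalse _ hF⟩
  -- measure of C ∩ E
  have hμCE : μ (C ∩ E) = ((d : ℕ) - 1 : ℕ) * 2⁻¹ ^ (d+2) := by
    have h1 : μ (C ∩ E) = μ ((C ∩ E) \ N) := (measure_diff_null hμN).symm
    rw [h1, hdecomp, measure_diff_null hμN]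
    have hdisj : Set.PairwiseDisjoint (↑V) atom := by
      intro c hc c' hc' hne
      have hex : ∃ k, c k ≠ c' k := by
        by_contra h
        push_neg at h
        exact hne (funext h)
      obtain ⟨k, hk⟩ := hex
      rw [Function.onFun, Set.disjoint_left]
      intro ω h1' h2'
      have hm1 : ω ∈ Bs (c k) k := Set.mem_iInter₂.1 h1' k (Finset.mem_univ k)
      have hm2 : ω ∈ Bs (c' k) k := Set.mem_iInter₂.1 h2' k (Finset.mem_univ k)
      cases hck : c k <;> cases hck' : c' k
      · exact hk (hck.trans hck'.symm)
      · exact hBsdis k ω (hck' ▸ hm2) (hck ▸ hm1)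
      · exact hBsdis k ω (hck ▸ hm1) (hck' ▸ hm2)
      · exact hk (hck.trans hck'.symm)
    rw [measure_biUnion_finset hdisj (fun c _ => hatommeas c)]
    rw [Finset.sum_congr rfl (fun c _ => hμatom c), Finset.sum_const, hVcard, nsmul_eq_mul]
  -- finish
  rw [cond_apply hCmeas μ E, hμC, hμCE]
  have hcast : (((d : ℕ) - 1 : ℕ) : ℝ≥0∞) = (d : ℝ≥0∞) - 1 := by
    rw [ENNReal.natCast_sub]; simp
  rw [hcast]
  set x : ℝ≥0∞ := (d : ℝ≥0∞) - 1 with hx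
  have hpow : (2:ℝ≥0∞)⁻¹ ^ (d+2) = (2⁻¹ * 2⁻¹) * 2⁻¹ ^ d := by ring
  have hne0 : (2:ℝ≥0∞)⁻¹ * 2⁻¹ ≠ 0 := by
    apply mul_ne_zero <;> exact ENNReal.inv_ne_zero.2 (by norm_num)
  have hnetop : (2:ℝ≥0∞)⁻¹ * 2⁻¹ ≠ ⊤ := by
    apply ENNReal.mul_ne_top <;> exact ENNReal.inv_ne_top.2 (by norm_num)
  calc (2⁻¹ * 2⁻¹ : ℝ≥0∞)⁻¹ * (x * 2⁻¹ ^ (d+2))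
      = ((2⁻¹ * 2⁻¹ : ℝ≥0∞)⁻¹ * (2⁻¹ * 2⁻¹)) * (x * 2⁻¹ ^ d) := by rw [hpow]; ring
    _ = x * 2⁻¹ ^ d := by rw [ENNReal.inv_mul_cancel hne0 hnetop, one_mul]
    _ = x / 2 ^ d := by rw [div_eq_mul_inv, ENNReal.inv_pow]
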